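/- Let (p,l) be an irregular pair. Then \Delta_{(p,l)} \equiv p^{-2}( S_{l+p-1}(p)/(l-1) - S_l(p)/l ) (mod p), where \Delta_{(p,l)} \equiv p^{-1}( B_{l+p-1}/(l+p-1) - B_l/l ) (mod p) with 0 \le \Delta_{(p,l)} < p. -/

import Mathlib

open Finset

section Aux

variable {p : ℕ}

private lemma mul_le_pow_self' {b v : ℕ} (hb : 2 ≤ b) (hv : 1 ≤ v) : b * v ≤ b ^ v := by
  have h1 : v - 1 < 2 ^ (v - 1) := Nat.lt_two_pow_self
  have h2 : 2 ^ (v - 1) ≤ b ^ (v - 1) := Nat.pow_le_pow_left hb _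
  calc b * v ≤ b * b ^ (v - 1) := Nat.mul_le_mul_left _ (by omega)
    _ = b ^ (v - 1 + 1) := by rw [pow_succ]; ring
    _ = b ^ v := by congr 1; omega

private lemma valA [hp : Fact p.Prime] {m : ℕ} (hp3 : 3 ≤ p) (hm : 2 ≤ m) :
    padicValNat p m ≤ m - 2 := by
  set v := padicValNat p m with hv
  rcases Nat.eq_zero_or_pos v with h | h
  · omega
  · have h1 : p ^ v ≤ m := Nat.le_of_dvd (by omega) pow_padicValNat_dvd
    have h2 : 3 ^ v ≤ p ^ v := Nat.pow_le_pow_left hp3 v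
    have h3 : 3 * v ≤ 3 ^ v := mul_le_pow_self' (by norm_num) h
    omega

private lemma valB [hp : Fact p.Prime] {m : ℕ} (hp7 : 7 ≤ p) (hm : 4 ≤ m) :
    padicValNat p m ≤ m - 4 := by
  set v := padicValNat p m with hv
  rcases Nat.eq_zero_or_pos v with h | h
  · omega
  · have h1 : p ^ v ≤ m := Nat.le_of_dvd (by omega) pow_padicValNat_dvd
    have h2 : 7 ^ v ≤ p ^ v := Nat.pow_le_pow_left hp7 v
    have h3 : 7 * v ≤ 7 ^ v := mul_le_pow_self' (by norm_num) h
    omega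

private lemma padicNorm_prime_pow [hp : Fact p.Prime] (k : ℕ) :
    padicNorm p ((p : ℚ) ^ k) = (p : ℚ) ^ (-(k : ℤ)) := by
  have hp0 : (0:ℚ) < p := by exact_mod_cast hp.out.pos
  induction k with
  | zero => simp
  | succ k ih =>
    rw [pow_succ, padicNorm.mul, ih, padicNorm.padicNorm_p hp.out.one_lt]
    rw [← zpow_neg_one, ← zpow_add₀ (by positivity : ((p:ℚ)) ≠ 0)]
    congr 1
    push_cast
    ring

private lemma helper_norm [hp : Fact p.Prime] {m k : ℕ} (hm : 0 < m)
    (hv : padicValNat p m ≤ k) :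
    padicNorm p ((p : ℚ) ^ (k + 1) / (m : ℚ)) ≤ (p : ℚ)⁻¹ := by
  have hp1 : (1:ℚ) < p := by exact_mod_cast hp.out.one_lt
  have hm0 : (m:ℚ) ≠ 0 := by exact_mod_cast hm.ne'
  have hnm : padicNorm p (m:ℚ) = (p:ℚ) ^ (-(padicValNat p m : ℤ)) := by
    rw [padicNorm, if_neg hm0, padicValRat.of_nat]
  rw [padicNorm.div, padicNorm_prime_pow, hnm,
    ← zpow_sub₀ (by positivity : ((p:ℚ)) ≠ 0), ← zpow_neg_one]
  apply zpow_le_zpow_right₀ hp1.le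
  omega

private lemma pnorm_mul_le [hp : Fact p.Prime] {a b s : ℚ} (ha : padicNorm p a ≤ 1)
    (hb : padicNorm p b ≤ s) : padicNorm p (a * b) ≤ s := by
  rw [padicNorm.mul]
  calc padicNorm p a * padicNorm p b ≤ 1 * s :=
        mul_le_mul ha hb (padicNorm.nonneg _) zero_le_one
    _ = s := one_mul s

private lemma num_dvd_iff_norm_le [hp : Fact p.Prime] (r : ℚ) :
    (p : ℤ) ∣ r.num ↔ padicNorm p r ≤ (p : ℚ)⁻¹ := by
  have h := padicNorm.dvd_iff_norm_le (p := p) (n := 1) (z := r.num)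
  have hcast : ((p ^ 1 : ℕ) : ℤ) = (p : ℤ) := by push_cast; ring
  have hinv : ((p:ℚ)) ^ (-(1:ℕ) : ℤ) = (p:ℚ)⁻¹ := by
    simp
  rw [hcast, hinv] at h
  have hden : padicNorm p (r.den : ℚ) ≤ 1 := padicNorm.of_nat _
  have hrw : padicNorm p r = padicNorm p (r.num : ℚ) / padicNorm p (r.den : ℚ) := by
    conv_lhs => rw [← Rat.num_div_den r]
    rw [padicNorm.div]
  constructor
  · intro hdvd
    have hnp : p ∣ r.num.natAbs := by
      have := Int.natAbs_dvd_natAbs.mpr hdvd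
      simpa using this
    have hcop : ¬ p ∣ r.den := by
      intro hc
      have h1 : p ∣ Nat.gcd r.num.natAbs r.den := Nat.dvd_gcd hnp hc
      rw [r.reduced] at h1
      exact hp.out.ne_one (Nat.eq_one_of_dvd_one h1)
    have hden1 : padicNorm p (r.den : ℚ) = 1 := (padicNorm.nat_eq_one_iff (p := p) r.den).mpr hcop
    rw [hrw, hden1, div_one]
    exact h.mp hdvd
  · intro hle
    apply h.mpr
    have hdnz : padicNorm p (r.den : ℚ) ≠ 0 := by
      apply padicNorm.nonzero
      exact_mod_cast r.den_nz
    have : padicNorm p (r.num : ℚ) = padicNorm p r * padicNorm p (r.den : ℚ) := by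
      rw [hrw, div_mul_cancel₀ _ hdnz]
    rw [this]
    calc padicNorm p r * padicNorm p (r.den : ℚ) ≤ (p:ℚ)⁻¹ * 1 :=
          mul_le_mul hle hden (padicNorm.nonneg _) (by positivity)
      _ = (p:ℚ)⁻¹ := mul_one _

private lemma sum_pow_norm_le [hp : Fact p.Prime] (k : ℕ) :
    padicNorm p (∑ ν ∈ Finset.range p, (ν:ℚ) ^ k) ≤ 1 := by
  have : (∑ ν ∈ Finset.range p, (ν:ℚ) ^ k) = ((∑ ν ∈ Finset.range p, ν ^ k : ℕ) : ℚ) := by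
    push_cast; rfl
  rw [this]
  exact padicNorm.of_nat _

end Aux

section Core

variable {p : ℕ}

private lemma zmod_sum_pow [hp : Fact p.Prime] {i : ℕ} (hi : i ≠ 0)
    (hnd : ¬ (p - 1) ∣ i) : ∑ x : ZMod p, x ^ i = 0 := by
  classical
  have hcard : Fintype.card (ZMod p) = p := ZMod.card p
  have hu := FiniteField.sum_pow_units (ZMod p) i
  rw [hcard] at hu
  let φ : (ZMod p)ˣ ↪ ZMod p := ⟨fun x ↦ x, Units.val_injective⟩
  have huniv : univ.map φ = univ \ {0} := by
    ext x
    simp only [mem_map, mem_univ, Function.Embedding.coeFn_mk, true_and, mem_sdiff,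
      mem_singleton, φ]
    exact isUnit_iff_ne_zero
  calc
    ∑ x : ZMod p, x ^ i = ∑ x ∈ univ \ {(0 : ZMod p)}, x ^ i := by
      rw [← sum_sdiff ({0} : Finset (ZMod p)).subset_univ, sum_singleton, zero_pow hi, add_zero]
    _ = ∑ x : (ZMod p)ˣ, ((x : ZMod p) ^ i) := by
      rw [← huniv, univ.sum_map φ]; rfl
    _ = 0 := by rw [hu, if_neg hnd]

private lemma sum_range_pow_dvd [hp : Fact p.Prime] {i : ℕ} (hi : i ≠ 0)
    (hnd : ¬ (p - 1) ∣ i) : p ∣ ∑ ν ∈ Finset.range p, ν ^ i := by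
  rw [← ZMod.natCast_eq_zero_iff]
  push_cast
  have hbij : ∑ ν ∈ Finset.range p, (ν : ZMod p) ^ i = ∑ x : ZMod p, x ^ i := by
    haveI : NeZero p := ⟨hp.out.pos.ne'⟩
    exact Finset.sum_nbij' (fun ν => ((ν : ZMod p))) (fun x => x.val)
      (fun a _ => mem_univ _) (fun a _ => Finset.mem_range.mpr (ZMod.val_lt a))
      (fun a ha => ZMod.val_cast_of_lt (Finset.mem_range.mp ha))
      (fun a _ => ZMod.natCast_rightInverse a) (fun a _ => rfl)
  rw [hbij]
  exact zmod_sum_pow hi hnd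

private lemma sum_range_pow_norm_lt [hp : Fact p.Prime] {i : ℕ} (hi : i ≠ 0)
    (hnd : ¬ (p - 1) ∣ i) :
    padicNorm p (∑ ν ∈ Finset.range p, (ν:ℚ) ^ i) ≤ (p:ℚ)⁻¹ := by
  have h1 : (∑ ν ∈ Finset.range p, (ν:ℚ) ^ i) = (((∑ ν ∈ Finset.range p, ν ^ i : ℕ) : ℤ) : ℚ) := by
    push_cast; rfl
  have h2 : ((p ^ 1 : ℕ) : ℤ) ∣ ((∑ ν ∈ Finset.range p, ν ^ i : ℕ) : ℤ) := by
    rw [pow_one]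
    exact_mod_cast sum_range_pow_dvd hi hnd
  have h3 := (padicNorm.dvd_iff_norm_le (p := p)).mp h2
  rw [h1]
  calc padicNorm p _ ≤ (p:ℚ) ^ (-(1:ℕ) : ℤ) := h3
    _ = (p:ℚ)⁻¹ := by simp

/-- Master congruence: `p * B_n ≡ S_n(p) (mod p)` p-adically. -/
private lemma bern_key [hp : Fact p.Prime] (hp3 : 3 ≤ p) (n : ℕ) :
    padicNorm p ((p:ℚ) * bernoulli n - ∑ ν ∈ Finset.range p, (ν:ℚ) ^ n) ≤ (p:ℚ)⁻¹ := by
  induction n using Nat.strong_induction_on with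
  | _ n ih =>
  have hp0 : (0:ℚ) < p := by exact_mod_cast hp.out.pos
  have hpinv : (0:ℚ) ≤ (p:ℚ)⁻¹ := by positivity
  have hpinv1 : (p:ℚ)⁻¹ ≤ 1 := by
    rw [inv_le_one₀ hp0]; exact_mod_cast hp.out.one_lt.le
  have hpB : ∀ i, i < n → padicNorm p ((p:ℚ) * bernoulli i) ≤ 1 := by
    intro i hi
    have h1 := ih i hi
    have h2 : padicNorm p (∑ ν ∈ Finset.range p, (ν:ℚ) ^ i) ≤ 1 := sum_pow_norm_le i
    have heq : (p:ℚ) * bernoulli i =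
        ((p:ℚ) * bernoulli i - ∑ ν ∈ Finset.range p, (ν:ℚ) ^ i) +
          ∑ ν ∈ Finset.range p, (ν:ℚ) ^ i := by ring
    rw [heq]
    exact padicNorm.nonarchimedean.trans (max_le (h1.trans hpinv1) h2)
  have hfaul := sum_range_pow p n
  rw [Finset.sum_range_succ] at hfaul
  have hn1 : ((n:ℚ) + 1) ≠ 0 := by positivity
  have hlast : bernoulli n * ((n+1).choose n) * (p:ℚ) ^ (n + 1 - n) / ((n:ℚ)+1)
      = (p:ℚ) * bernoulli n := by
    rw [Nat.choose_succ_self_right]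
    have h1 : n + 1 - n = 1 := by omega
    rw [h1, pow_one]
    push_cast
    field_simp
  have hmain : (p:ℚ) * bernoulli n - ∑ ν ∈ Finset.range p, (ν:ℚ) ^ n
      = - ∑ i ∈ Finset.range n,
          bernoulli i * ((n+1).choose i) * (p:ℚ) ^ (n + 1 - i) / ((n:ℚ)+1) := by
    rw [hfaul]
    push_cast
    push_cast at hlast
    rw [hlast]
    ring
  rw [hmain, padicNorm.neg]
  apply padicNorm.sum_le' _ hpinv
  intro i hi
  rw [Finset.mem_range] at hi
  obtain ⟨j, hj⟩ : ∃ j, n + 1 - i = j + 2 := ⟨n - 1 - i, by omega⟩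
  have hchoose : ((n+1).choose i : ℚ) * ((j:ℚ) + 2) = (n.choose i : ℚ) * ((n:ℚ)+1) := by
    have h := Nat.choose_mul_succ_eq n i
    rw [hj] at h
    exact_mod_cast h.symm
  have hj2 : ((j:ℚ) + 2) ≠ 0 := by positivity
  have hterm : bernoulli i * ((n+1).choose i) * (p:ℚ) ^ (n + 1 - i) / ((n:ℚ)+1)
      = ((p:ℚ) * bernoulli i) * (n.choose i : ℚ) * ((p:ℚ) ^ (j+1) / ((j + 2 : ℕ) : ℚ)) := by
    rw [hj]
    push_cast
    field_simp
    linear_combination (bernoulli i * (p:ℚ) ^ (j+2)) * hchoose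
  rw [hterm]
  apply pnorm_mul_le (pnorm_mul_le (hpB i hi) (padicNorm.of_nat _))
  exact helper_norm (by omega) ((valA hp3 (by omega)).trans (by omega))

private lemma pB_norm_le [hp : Fact p.Prime] (hp3 : 3 ≤ p) (i : ℕ) :
    padicNorm p ((p:ℚ) * bernoulli i) ≤ 1 := by
  have h1 := bern_key hp3 i
  have h2 : padicNorm p (∑ ν ∈ Finset.range p, (ν:ℚ) ^ i) ≤ 1 := sum_pow_norm_le i
  have hp0 : (0:ℚ) < p := by exact_mod_cast hp.out.pos
  have hpinv1 : (p:ℚ)⁻¹ ≤ 1 := by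
    rw [inv_le_one₀ hp0]; exact_mod_cast hp.out.one_lt.le
  have heq : (p:ℚ) * bernoulli i =
      ((p:ℚ) * bernoulli i - ∑ ν ∈ Finset.range p, (ν:ℚ) ^ i) +
        ∑ ν ∈ Finset.range p, (ν:ℚ) ^ i := by ring
  rw [heq]
  exact padicNorm.nonarchimedean.trans (max_le (h1.trans hpinv1) h2)

/-- Weak von Staudt–Clausen: if `(p-1) ∤ i` then `B_i` is `p`-integral. -/
private lemma bern_norm_le_one [hp : Fact p.Prime] (hp3 : 3 ≤ p) {i : ℕ} (hi0 : 0 < i)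
    (hnd : ¬ (p - 1) ∣ i) : padicNorm p (bernoulli i) ≤ 1 := by
  have h1 := bern_key hp3 i
  have h2 := sum_range_pow_norm_lt (p := p) hi0.ne' hnd
  have hp0 : (0:ℚ) < p := by exact_mod_cast hp.out.pos
  have heq : (p:ℚ) * bernoulli i =
      ((p:ℚ) * bernoulli i - ∑ ν ∈ Finset.range p, (ν:ℚ) ^ i) +
        ∑ ν ∈ Finset.range p, (ν:ℚ) ^ i := by ring
  have h3 : padicNorm p ((p:ℚ) * bernoulli i) ≤ (p:ℚ)⁻¹ := by
    rw [heq]; exact padicNorm.nonarchimedean.trans (max_le h1 h2)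
  have h4 : padicNorm p ((p:ℚ) * bernoulli i)
      = (p:ℚ)⁻¹ * padicNorm p (bernoulli i) := by
    rw [padicNorm.mul, padicNorm.padicNorm_p hp.out.one_lt]
  rw [h4] at h3
  calc padicNorm p (bernoulli i) = (p:ℚ) * ((p:ℚ)⁻¹ * padicNorm p (bernoulli i)) := by
        field_simp
    _ ≤ (p:ℚ) * (p:ℚ)⁻¹ := by
        apply mul_le_mul_of_nonneg_left h3 hp0.le
    _ = 1 := by field_simp

end Core

section MainAux

variable {p : ℕ}

private lemma main_aux [hp : Fact p.Prime] (hp7 : 7 ≤ p) {n c : ℕ} (hn4 : 4 ≤ n)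
    (hB1 : bernoulli (n - 1) = 0)
    (hB2 : padicNorm p (bernoulli (n - 2)) ≤ 1)
    (hc : ¬ p ∣ c) (hc0 : 0 < c) :
    padicNorm p (((∑ ν ∈ Finset.range p, (ν:ℚ) ^ n) - (p:ℚ) * bernoulli n)
      / ((c:ℚ) * (p:ℚ) ^ 2)) ≤ (p:ℚ)⁻¹ := by
  have hp3 : 3 ≤ p := by omega
  have hp0 : (0:ℚ) < p := by exact_mod_cast hp.out.pos
  have hpinv : (0:ℚ) ≤ (p:ℚ)⁻¹ := by positivity
  have hc0' : ((c:ℚ)) ≠ 0 := by exact_mod_cast hc0.ne'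
  have nc1 : padicNorm p ((c:ℚ)⁻¹) ≤ 1 := by
    rw [← one_div, padicNorm.div, padicNorm.one,
      (padicNorm.nat_eq_one_iff (p := p) c).mpr hc]
    norm_num
  have hfaul := sum_range_pow p n
  rw [Finset.sum_range_succ] at hfaul
  have hn1 : ((n:ℚ) + 1) ≠ 0 := by positivity
  have hlast : bernoulli n * ((n+1).choose n) * (p:ℚ) ^ (n + 1 - n) / ((n:ℚ)+1)
      = (p:ℚ) * bernoulli n := by
    rw [Nat.choose_succ_self_right]
    have h1 : n + 1 - n = 1 := by omega
    rw [h1, pow_one]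
    push_cast
    field_simp
  have hmain : (∑ ν ∈ Finset.range p, (ν:ℚ) ^ n) - (p:ℚ) * bernoulli n
      = ∑ i ∈ Finset.range n,
          bernoulli i * ((n+1).choose i) * (p:ℚ) ^ (n + 1 - i) / ((n:ℚ)+1) := by
    rw [hfaul]
    push_cast
    push_cast at hlast
    rw [hlast]
    ring
  rw [hmain, Finset.sum_div]
  apply padicNorm.sum_le' _ hpinv
  intro i hi
  rw [Finset.mem_range] at hi
  by_cases hi1 : i = n - 1
  · subst hi1
    rw [hB1]
    simp only [zero_mul, zero_div, padicNorm.zero]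
    exact hpinv
  by_cases hi2 : i = n - 2
  · subst hi2
    have he : n + 1 - (n - 2) = 3 := by omega
    rw [he]
    have hch := Nat.choose_mul_succ_eq n (n - 2)
    rw [he] at hch
    have hchoose : ((n+1).choose (n-2) : ℚ) * 3 = (n.choose (n-2) : ℚ) * ((n:ℚ)+1) := by
      exact_mod_cast hch.symm
    have hterm : bernoulli (n-2) * ((n+1).choose (n-2)) * (p:ℚ) ^ 3 / ((n:ℚ)+1)
        / ((c:ℚ) * (p:ℚ) ^ 2)
        = (c:ℚ)⁻¹ * (bernoulli (n-2) * (n.choose (n-2) : ℚ)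
            * ((p:ℚ) ^ (0+1) / ((3 : ℕ) : ℚ))) := by
      push_cast
      field_simp
      linear_combination (bernoulli (n-2)) * hchoose
    rw [hterm]
    apply pnorm_mul_le nc1
    apply pnorm_mul_le (pnorm_mul_le hB2 (padicNorm.of_nat _))
    apply helper_norm (by norm_num)
    rw [padicValNat.eq_zero_of_not_dvd (fun h => by have := Nat.le_of_dvd (by norm_num) h; omega : ¬ p ∣ 3)]
  · -- i ≤ n - 3
    obtain ⟨j, hj⟩ : ∃ j, n + 1 - i = j + 4 := ⟨n - 3 - i, by omega⟩
    have hch := Nat.choose_mul_succ_eq n i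
    rw [hj] at hch
    have hchoose : ((n+1).choose i : ℚ) * ((j:ℚ) + 4) = (n.choose i : ℚ) * ((n:ℚ)+1) := by
      exact_mod_cast hch.symm
    have hterm : bernoulli i * ((n+1).choose i) * (p:ℚ) ^ (n + 1 - i) / ((n:ℚ)+1)
        / ((c:ℚ) * (p:ℚ) ^ 2)
        = (c:ℚ)⁻¹ * (((p:ℚ) * bernoulli i) * (n.choose i : ℚ)
            * ((p:ℚ) ^ (j+1) / ((j + 4 : ℕ) : ℚ))) := by
      rw [hj]
      push_cast
      have hj4 : ((j:ℚ) + 4) ≠ 0 := by positivity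
      field_simp
      linear_combination (bernoulli i * (p:ℚ) ^ (j+4)) * hchoose
    rw [hterm]
    apply pnorm_mul_le nc1
    apply pnorm_mul_le (pnorm_mul_le (pB_norm_le hp3 i) (padicNorm.of_nat _))
    exact helper_norm (by omega) ((valB hp7 (by omega)).trans (by omega))

end MainAux

private lemma bern_odd_zero {k : ℕ} (hk : Odd k) (h1 : 1 < k) : bernoulli k = 0 := by
  rw [bernoulli_eq_bernoulli'_of_ne_one (by omega)]
  exact bernoulli'_eq_zero_of_odd hk h1

/-- For an irregular pair `(p, l)` with
`Δ_{(p,l)} ≡ p⁻¹(B_{l+p-1}/(l+p-1) - B_l/l) (mod p)`, `0 ≤ Δ_{(p,l)} < p`,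
one has `Δ_{(p,l)} ≡ p⁻²(S_{l+p-1}(p)/(l-1) - S_l(p)/l) (mod p)`. -/
theorem stmt_10 (p l d : ℕ) (hp : p.Prime) (hodd : Odd p)
    (hl2 : 2 ≤ l) (hlp : l ≤ p - 3) (hle : Even l)
    (hirr : (p : ℤ) ∣ (bernoulli l).num)
    (hd : d < p)
    (hΔ : (p : ℤ) ∣
      ((bernoulli (l + p - 1) / (l + p - 1) - bernoulli l / l) / p - d).num) :
    (p : ℤ) ∣
      (((∑ ν ∈ Finset.range p, (ν : ℚ)^(l + p - 1)) / (l - 1) -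
          (∑ ν ∈ Finset.range p, (ν : ℚ)^l) / l) / p^2 - d).num := by
  haveI hfp : Fact p.Prime := ⟨hp⟩
  -- l = 2 is impossible since bernoulli 2 = 1/6 has numerator 1
  have hl4 : 4 ≤ l := by
    by_contra h
    have hl2' : l = 2 := by
      rw [Nat.even_iff] at hle; omega
    subst hl2'
    have hb2 : bernoulli 2 = 1/6 := by
      rw [bernoulli_eq_bernoulli'_of_ne_one (by norm_num), bernoulli'_two]
    rw [hb2] at hirr
    have : ((1:ℚ)/6).num = 1 := by norm_num
    rw [this] at hirr
    have := Int.le_of_dvd one_pos hirr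
    have := hp.two_le
    omega
  have hp7 : 7 ≤ p := by
    have := hp.two_le; omega
  have hp3 : 3 ≤ p := by omega
  have hpl : ¬ p ∣ l := fun h => by have := Nat.le_of_dvd (by omega) h; omega
  have hpl1 : ¬ p ∣ (l - 1) := fun h => by have := Nat.le_of_dvd (by omega) h; omega
  have hpq : ¬ p ∣ (l + p - 1) := by
    intro h
    have h2 : p ∣ (l + p - 1) - p := Nat.dvd_sub h dvd_rfl
    have h3 : (l + p - 1) - p = l - 1 := by omega
    rw [h3] at h2
    exact hpl1 h2
  -- casts
  have cl1 : ((l - 1 : ℕ) : ℚ) = (l:ℚ) - 1 := by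
    rw [Nat.cast_sub (by omega : 1 ≤ l)]; norm_num
  have cq : ((l + p - 1 : ℕ) : ℚ) = (l:ℚ) + (p:ℚ) - 1 := by
    rw [Nat.cast_sub (by omega : 1 ≤ l + p)]; push_cast; ring
  -- norms of units
  have nL : padicNorm p ((l:ℚ)) = 1 := (padicNorm.nat_eq_one_iff (p := p) l).mpr hpl
  have nL1 : padicNorm p ((l:ℚ) - 1) = 1 := by
    rw [← cl1]; exact (padicNorm.nat_eq_one_iff (p := p) (l-1)).mpr hpl1
  have nQ : padicNorm p ((l:ℚ) + (p:ℚ) - 1) = 1 := by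
    rw [← cq]; exact (padicNorm.nat_eq_one_iff (p := p) (l+p-1)).mpr hpq
  have hp0 : (0:ℚ) < p := by exact_mod_cast hp.pos
  have hpinv1 : (p:ℚ)⁻¹ ≤ 1 := by
    rw [inv_le_one₀ hp0]; exact_mod_cast hp.one_lt.le
  -- hypotheses as norm bounds
  have hXd : padicNorm p
      ((bernoulli (l + p - 1) / ((l:ℚ) + (p:ℚ) - 1) - bernoulli l / (l:ℚ)) / (p:ℚ)
        - (d:ℚ)) ≤ (p:ℚ)⁻¹ := (num_dvd_iff_norm_le _).mp hΔ
  have hBl : padicNorm p (bernoulli l) ≤ (p:ℚ)⁻¹ := (num_dvd_iff_norm_le _).mp hirr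
  have hBl' : padicNorm p (bernoulli l / (l:ℚ)) ≤ (p:ℚ)⁻¹ := by
    rw [padicNorm.div, nL, div_one]; exact hBl
  set X : ℚ := (bernoulli (l + p - 1) / ((l:ℚ) + (p:ℚ) - 1) - bernoulli l / (l:ℚ)) / (p:ℚ)
    with hXdef
  have hX1 : padicNorm p X ≤ 1 := by
    have he : X = (X - (d:ℚ)) + (d:ℚ) := by ring
    rw [he]
    exact padicNorm.nonarchimedean.trans
      (max_le (hXd.trans hpinv1) (padicNorm.of_nat d))
  -- nonzero denominators
  have h4l : (4:ℚ) ≤ (l:ℚ) := by exact_mod_cast hl4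
  have hl0 : ((l:ℚ)) ≠ 0 := by linarith
  have hl10 : ((l:ℚ) - 1) ≠ 0 := by linarith
  have hq0 : ((l:ℚ) + (p:ℚ) - 1) ≠ 0 := by linarith
  have hpne : ((p:ℚ)) ≠ 0 := hp0.ne'
  -- norm of B_{l+p-1}
  have hW : padicNorm p (bernoulli (l + p - 1) / ((l:ℚ) + (p:ℚ) - 1)) ≤ (p:ℚ)⁻¹ := by
    have he : bernoulli (l + p - 1) / ((l:ℚ) + (p:ℚ) - 1)
        = X * (p:ℚ) + bernoulli l / (l:ℚ) := by
      rw [hXdef]; field_simp; ring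
    rw [he]
    have hXp : padicNorm p (X * (p:ℚ)) ≤ (p:ℚ)⁻¹ := by
      rw [padicNorm.mul, padicNorm.padicNorm_p hp.one_lt]
      calc padicNorm p X * (p:ℚ)⁻¹ ≤ 1 * (p:ℚ)⁻¹ :=
            mul_le_mul_of_nonneg_right hX1 (by positivity)
        _ = (p:ℚ)⁻¹ := one_mul _
    exact padicNorm.nonarchimedean.trans (max_le hXp hBl')
  have hB1n : padicNorm p (bernoulli (l + p - 1)) ≤ (p:ℚ)⁻¹ := by
    rw [padicNorm.div, nQ, div_one] at hW
    exact hW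
  -- odd-index bernoulli vanishing
  have hlodd : bernoulli (l - 1) = 0 := by
    apply bern_odd_zero _ (by omega)
    rw [Nat.odd_iff]
    rw [Nat.even_iff] at hle
    omega
  have hqodd : bernoulli (l + p - 1 - 1) = 0 := by
    apply bern_odd_zero _ (by omega)
    rw [Nat.odd_iff]
    rw [Nat.even_iff] at hle
    rw [Nat.odd_iff] at hodd
    omega
  -- p-integrality of the two sub-top bernoulli numbers
  have hB2l : padicNorm p (bernoulli (l - 2)) ≤ 1 := by
    apply bern_norm_le_one hp3 (by omega : 0 < l - 2)
    intro h
    have := Nat.le_of_dvd (by omega) h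
    omega
  have hB2q : padicNorm p (bernoulli (l + p - 1 - 2)) ≤ 1 := by
    apply bern_norm_le_one hp3 (by omega : 0 < l + p - 1 - 2)
    intro h
    have h2 : (p - 1) ∣ (l + p - 1 - 2) - (p - 1) := Nat.dvd_sub h dvd_rfl
    have h3 : (l + p - 1 - 2) - (p - 1) = l - 2 := by omega
    rw [h3] at h2
    have := Nat.le_of_dvd (by omega) h2
    omega
  -- main termwise bounds
  have hD1 := main_aux hp7 (n := l + p - 1) (c := l - 1) (by omega) hqodd hB2q hpl1 (by omega)
  have hD0 := main_aux hp7 (n := l) (c := l) hl4 hlodd hB2l hpl (by omega)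
  rw [cl1] at hD1
  -- the E term
  have hE : padicNorm p (bernoulli (l + p - 1)
      / (((l:ℚ) - 1) * ((l:ℚ) + (p:ℚ) - 1))) ≤ (p:ℚ)⁻¹ := by
    rw [padicNorm.div, padicNorm.mul, nL1, nQ]
    simpa using hB1n
  -- algebraic decomposition
  apply (num_dvd_iff_norm_le _).mpr
  have hsplit : ((∑ ν ∈ Finset.range p, (ν : ℚ)^(l + p - 1)) / ((l:ℚ) - 1) -
          (∑ ν ∈ Finset.range p, (ν : ℚ)^l) / (l:ℚ)) / (p:ℚ)^2 - (d:ℚ)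
      = (X - (d:ℚ))
        + ((∑ ν ∈ Finset.range p, (ν:ℚ) ^ (l + p - 1)) - (p:ℚ) * bernoulli (l + p - 1))
            / (((l:ℚ) - 1) * (p:ℚ) ^ 2)
        - ((∑ ν ∈ Finset.range p, (ν:ℚ) ^ l) - (p:ℚ) * bernoulli l)
            / ((l:ℚ) * (p:ℚ) ^ 2)
        + bernoulli (l + p - 1) / (((l:ℚ) - 1) * ((l:ℚ) + (p:ℚ) - 1)) := by
    rw [hXdef]
    field_simp
    ring
  rw [hsplit]
  refine padicNorm.nonarchimedean.trans (max_le
    (padicNorm.sub.trans (max_le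
      (padicNorm.nonarchimedean.trans (max_le hXd hD1)) hD0)) hE)
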